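/- Let 1 < p < 2 and let φ, B be as above. Define the Bellman function B(x,z) for x,z > 0. Then B satisfies the majorization B(x,z) ≤ (p-1)^{-p} x^p / p + z^{p'} / p' for all x,z > 0, where p' = p/(p-1). -/

import Mathlib

noncomputable def B (p : ℝ) (φ : ℝ → ℝ) (x z : ℝ) : ℝ :=
  x * z * ((p - 1) / p * φ (x ^ (1 - p) * z) + (2 - p) / (p * (p - 1))
    + 1 / (p * (p - 1) * φ (x ^ (1 - p) * z)))

namespace Stmt15Aux

variable {p : ℝ}

/-- Derivative of the auxiliary function `G`. -/
lemma hasDerivAt_G (hp1 : 1 < p) (hp2 : p < 2) {u : ℝ} (hu : 0 < u) :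
    HasDerivAt (fun u : ℝ => p ^ (2 - p) * ((1 + u) ^ p / p - (1 + u) ^ (p - 1) / (p - 1))
        - u ^ p / p + (p - 1) ^ (-p) / p)
      (u * (((1 + u) / p) ^ (p - 2) - u ^ (p - 2))) u := by
  have hp0 : (0 : ℝ) < p := by linarith
  have hp1' : (0 : ℝ) < p - 1 := by linarith
  have h1u : (0 : ℝ) < 1 + u := by linarith
  have hA : HasDerivAt (fun y : ℝ => 1 + y) 1 u := (hasDerivAt_id u).const_add 1
  have h1 : HasDerivAt (fun y : ℝ => (1 + y) ^ p) (p * (1 + u) ^ (p - 1) * 1) u :=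
    (Real.hasDerivAt_rpow_const (p := p) (Or.inl h1u.ne')).comp u hA
  have h2 : HasDerivAt (fun y : ℝ => (1 + y) ^ (p - 1))
      ((p - 1) * (1 + u) ^ (p - 1 - 1) * 1) u :=
    (Real.hasDerivAt_rpow_const (p := p - 1) (Or.inl h1u.ne')).comp u hA
  have h3 : HasDerivAt (fun y : ℝ => y ^ p) (p * u ^ (p - 1)) u :=
    Real.hasDerivAt_rpow_const (Or.inl hu.ne')
  have hG := ((((h1.div_const p).sub (h2.div_const (p - 1))).const_mul
    (p ^ (2 - p))).sub (h3.div_const p)).add_const ((p - 1) ^ (-p) / p)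
  refine hG.congr_deriv ?_
  have e1 : (1 + u) ^ (p - 1) = (1 + u) ^ (p - 2) * (1 + u) := by
    rw [show p - 1 = (p - 2) + 1 by ring, Real.rpow_add_one h1u.ne']
  have e2 : u ^ (p - 1) = u ^ (p - 2) * u := by
    rw [show p - 1 = (p - 2) + 1 by ring, Real.rpow_add_one hu.ne']
  have e3 : ((1 + u) / p) ^ (p - 2) = (1 + u) ^ (p - 2) / p ^ (p - 2) :=
    Real.div_rpow h1u.le hp0.le _
  have e4 : p ^ (2 - p) = (p ^ (p - 2))⁻¹ := by
    rw [show (2 - p) = -(p - 2) by ring, Real.rpow_neg hp0.le]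
  have hpne : p ≠ 0 := hp0.ne'
  have hp1ne : p - 1 ≠ 0 := hp1'.ne'
  have hppne : p ^ (p - 2) ≠ 0 := (Real.rpow_pos_of_pos hp0 _).ne'
  rw [e3, e4, e1, e2, show p - 1 - 1 = p - 2 by ring]
  field_simp
  ring

/-- The key calculus inequality: the minimum of `G` is `0`, attained at `u = 1/(p-1)`. -/
lemma key1 (hp1 : 1 < p) (hp2 : p < 2) {u : ℝ} (hu : 0 < u) :
    u ^ p / p ≤ (p - 1) ^ (-p) / p
      + p ^ (2 - p) * ((1 + u) ^ p / p - (1 + u) ^ (p - 1) / (p - 1)) := by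
  have hp0 : (0 : ℝ) < p := by linarith
  have hp1' : (0 : ℝ) < p - 1 := by linarith
  have hp2' : p - 2 < 0 := by linarith
  set u0 : ℝ := 1 / (p - 1) with hu0_def
  have hu0 : 0 < u0 := by positivity
  set G : ℝ → ℝ := fun u : ℝ =>
    p ^ (2 - p) * ((1 + u) ^ p / p - (1 + u) ^ (p - 1) / (p - 1))
      - u ^ p / p + (p - 1) ^ (-p) / p with hG_def
  -- value at the minimum point
  have h1u0 : 1 + u0 = p / (p - 1) := by
    rw [hu0_def]; field_simp; ring
  have hGu0 : G u0 = 0 := by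
    have hb : (0 : ℝ) < p / (p - 1) := by positivity
    have e1 : (p / (p - 1)) ^ p = (p / (p - 1)) ^ (p - 1) * (p / (p - 1)) := by
      have := Real.rpow_add_one hb.ne' (p - 1)
      rw [show p - 1 + 1 = p by ring] at this
      exact this
    have e2 : u0 ^ p = (p - 1) ^ (-p) := by
      rw [hu0_def, one_div, Real.inv_rpow hp1'.le, ← Real.rpow_neg hp1'.le]
    have hq : (p / (p - 1)) ^ p / p - (p / (p - 1)) ^ (p - 1) / (p - 1) = 0 := by
      rw [e1]; field_simp; ring
    rw [hG_def]; simp only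
    rw [h1u0, hq, e2]; ring
  -- continuity helper
  have hcont : ∀ y : ℝ, 0 < y → ContinuousAt G y := fun y hy =>
    (hasDerivAt_G hp1 hp2 hy).continuousAt
  have hderiv : ∀ y : ℝ, 0 < y →
      deriv G y = y * (((1 + y) / p) ^ (p - 2) - y ^ (p - 2)) := fun y hy =>
    (hasDerivAt_G hp1 hp2 hy).deriv
  -- show `0 ≤ G u` i.e. `G u0 ≤ G u`
  have hmain : G u0 ≤ G u := by
    rcases lt_trichotomy u u0 with hlt | heq | hgt
    · -- G strictly antitone on [u, u0]
      have hanti : StrictAntiOn G (Set.Icc u u0) := by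
        apply strictAntiOn_of_deriv_neg (convex_Icc u u0)
        · intro y hy
          exact (hcont y (lt_of_lt_of_le hu hy.1)).continuousWithinAt
        · intro y hy
          rw [interior_Icc] at hy
          have hy0 : 0 < y := lt_trans hu hy.1
          rw [hderiv y hy0]
          have hlt2 : y < (1 + y) / p := by
            rw [lt_div_iff₀ hp0]
            have : (p - 1) * y < 1 := by
              have : y < 1 / (p - 1) := hy.2
              calc (p - 1) * y < (p - 1) * (1 / (p - 1)) := by
                    exact mul_lt_mul_of_pos_left this hp1'
                _ = 1 := by field_simp
            nlinarith
          have hr : ((1 + y) / p) ^ (p - 2) < y ^ (p - 2) :=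
            Real.rpow_lt_rpow_of_neg hy0 hlt2 hp2'
          have : ((1 + y) / p) ^ (p - 2) - y ^ (p - 2) < 0 := by linarith
          exact mul_neg_of_pos_of_neg hy0 this
      exact (hanti (Set.left_mem_Icc.2 hlt.le) (Set.right_mem_Icc.2 hlt.le) hlt).le
    · rw [heq]
    · -- G strictly monotone on [u0, u]
      have hmono : StrictMonoOn G (Set.Icc u0 u) := by
        apply strictMonoOn_of_deriv_pos (convex_Icc u0 u)
        · intro y hy
          exact (hcont y (lt_of_lt_of_le hu0 hy.1)).continuousWithinAt
        · intro y hy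
          rw [interior_Icc] at hy
          have hy0 : 0 < y := lt_trans hu0 hy.1
          rw [hderiv y hy0]
          have hb : (0 : ℝ) < (1 + y) / p := by positivity
          have hlt2 : (1 + y) / p < y := by
            rw [div_lt_iff₀ hp0]
            have : 1 / (p - 1) < y := hy.1
            have : 1 < (p - 1) * y := by
              calc (1 : ℝ) = (p - 1) * (1 / (p - 1)) := by field_simp
                _ < (p - 1) * y := mul_lt_mul_of_pos_left this hp1'
            nlinarith
          have hr : y ^ (p - 2) < ((1 + y) / p) ^ (p - 2) :=
            Real.rpow_lt_rpow_of_neg hb hlt2 hp2'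
          have : 0 < ((1 + y) / p) ^ (p - 2) - y ^ (p - 2) := by linarith
          exact mul_pos hy0 this
      exact (hmono (Set.left_mem_Icc.2 hgt.le) (Set.right_mem_Icc.2 hgt.le) hgt).le
  rw [hGu0] at hmain
  rw [hG_def] at hmain
  simp only at hmain
  linarith

/-- Algebraic identity: using the implicit relation, `s·g(u) = u·s - P(u)`. -/
lemma key2 (hp1 : 1 < p) (hp2 : p < 2) {s u : ℝ} (hs : 0 < s) (hu : 0 < u)
    (hrel : u * (1 + u) ^ (p - 2) = p ^ (p - 2) * s) :
    s * ((p - 1) / p * u + (2 - p) / (p * (p - 1)) + 1 / (p * (p - 1) * u))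
      = u * s - p ^ (2 - p) * ((1 + u) ^ p / p - (1 + u) ^ (p - 1) / (p - 1)) := by
  have hp0 : (0 : ℝ) < p := by linarith
  have hp1' : (0 : ℝ) < p - 1 := by linarith
  have h1u : (0 : ℝ) < 1 + u := by linarith
  have hsval : s = p ^ (2 - p) * (u * (1 + u) ^ (p - 2)) := by
    rw [hrel, ← mul_assoc, ← Real.rpow_add hp0]
    norm_num
  have e1 : (1 + u) ^ p = (1 + u) ^ (p - 2) * ((1 + u) * (1 + u)) := by
    rw [show p = (p - 2) + 1 + 1 by ring, Real.rpow_add_one h1u.ne',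
      Real.rpow_add_one h1u.ne']
    ring
  have e2 : (1 + u) ^ (p - 1) = (1 + u) ^ (p - 2) * (1 + u) := by
    rw [show p - 1 = (p - 2) + 1 by ring, Real.rpow_add_one h1u.ne']
  rw [hsval, e1, e2]
  have hpne : p ≠ 0 := hp0.ne'
  have hp1ne : p - 1 ≠ 0 := hp1'.ne'
  have hune : u ≠ 0 := hu.ne'
  field_simp
  ring

end Stmt15Aux

theorem stmt_15 (p : ℝ) (hp1 : 1 < p) (hp2 : p < 2) (φ : ℝ → ℝ)
    (hφpos : ∀ s, 0 < s → 0 < φ s)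
    (hφ : ∀ s, 0 < s → φ s * (1 + φ s) ^ (p - 2) = p ^ (p - 2) * s) :
    ∀ x z : ℝ, 0 < x → 0 < z →
      B p φ x z ≤ (p - 1) ^ (-p) * x ^ p / p + z ^ (p / (p - 1)) / (p / (p - 1)) := by
  intro x z hx hz
  have hp0 : (0 : ℝ) < p := by linarith
  have hp1' : (0 : ℝ) < p - 1 := by linarith
  set q : ℝ := p / (p - 1) with hq_def
  have hq0 : 0 < q := by positivity
  set s : ℝ := x ^ (1 - p) * z with hs_def
  have hs : 0 < s := by
    have := Real.rpow_pos_of_pos hx (1 - p)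
    positivity
  set u : ℝ := φ s with hu_def
  have hu : 0 < u := hφpos s hs
  have hrel : u * (1 + u) ^ (p - 2) = p ^ (p - 2) * s := hφ s hs
  have hxp : (0 : ℝ) < x ^ p := Real.rpow_pos_of_pos hx p
  -- relations between x, z, s
  have hzx : x ^ (p - 1) * s = z := by
    rw [hs_def, ← mul_assoc, ← Real.rpow_add hx]
    norm_num
  have hxz : x * z = x ^ p * s := by
    rw [← hzx, ← mul_assoc]
    nth_rewrite 1 [← Real.rpow_one x]
    rw [← Real.rpow_add hx]
    norm_num
  have hzq : z ^ q = x ^ p * s ^ q := by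
    rw [← hzx, Real.mul_rpow (Real.rpow_pos_of_pos hx _).le hs.le,
      ← Real.rpow_mul hx.le, show (p - 1) * q = p by rw [hq_def]; field_simp]
  -- the core inequality in the variable s
  have hconj : p.HolderConjugate q := (Real.holderConjugate_iff_eq_conjExponent hp1).2 hq_def
  have hyoung : u * s ≤ u ^ p / p + s ^ q / q :=
    Real.young_inequality_of_nonneg hu.le hs.le hconj
  have hkey1 := Stmt15Aux.key1 hp1 hp2 hu
  have hkey2 := Stmt15Aux.key2 hp1 hp2 hs hu hrel
  have hcore : s * ((p - 1) / p * u + (2 - p) / (p * (p - 1)) + 1 / (p * (p - 1) * u))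
      ≤ (p - 1) ^ (-p) / p + s ^ q / q := by
    rw [hkey2]
    linarith
  -- conclude by multiplying by x^p
  have hB : B p φ x z = x ^ p *
      (s * ((p - 1) / p * u + (2 - p) / (p * (p - 1)) + 1 / (p * (p - 1) * u))) := by
    rw [B, ← hs_def, ← hu_def, hxz]
    ring
  rw [hB, hzq]
  calc x ^ p * (s * ((p - 1) / p * u + (2 - p) / (p * (p - 1)) + 1 / (p * (p - 1) * u)))
      ≤ x ^ p * ((p - 1) ^ (-p) / p + s ^ q / q) :=
        mul_le_mul_of_nonneg_left hcore hxp.le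
    _ = (p - 1) ^ (-p) * x ^ p / p + x ^ p * s ^ q / q := by ring
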